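/- The Krull dimension of the quotient ring ℚ[X,Y,Z]/⟨X, YZ + Y³ + Z³⟩ equals 1; equivalently, the prime ideal ⟨X, YZ+Y³+Z³⟩ has height 2 in ℚ[X,Y,Z]. -/

import Mathlib

open MvPolynomial

noncomputable section




private def e4 (x : ℕ × ℕ × ℕ × ℕ) : Fin 4 →₀ ℕ :=
  Finsupp.equivFunOnFinite.symm ![x.1, x.2.1, x.2.2.1, x.2.2.2]

private def e3 (x : ℕ × ℕ × ℕ) : Fin 3 →₀ ℕ :=
  Finsupp.equivFunOnFinite.symm ![x.1, x.2.1, x.2.2]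

private lemma e4_apply (x : ℕ × ℕ × ℕ × ℕ) (i : Fin 4) :
    e4 x i = ![x.1, x.2.1, x.2.2.1, x.2.2.2] i := rfl

private lemma e4_inj : Function.Injective e4 := by
  intro a b h
  have h' : ![a.1, a.2.1, a.2.2.1, a.2.2.2] = ![b.1, b.2.1, b.2.2.1, b.2.2.2] :=
    Finsupp.equivFunOnFinite.symm.injective h
  have h0 := congrFun h' 0
  have h1 := congrFun h' 1
  have h2 := congrFun h' 2
  have h3 := congrFun h' 3
  simp only [Matrix.cons_val_zero, Matrix.cons_val_one, Matrix.head_cons,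
    Matrix.cons_val_two, Matrix.tail_cons, Matrix.cons_val_three] at h0 h1 h2 h3
  exact Prod.ext h0 (Prod.ext h1 (Prod.ext h2 h3))

private lemma e3_surj (β : Fin 3 →₀ ℕ) : e3 (β 0, β 1, β 2) = β := by
  ext i
  fin_cases i <;> rfl

lemma exists_relation (P : Fin 4 → MvPolynomial (Fin 3) ℚ) :
    ∃ Q : MvPolynomial (Fin 4) ℚ, Q ≠ 0 ∧ aeval P Q = 0 := by
  by_contra hcon
  push_neg at hcon
  have hker : LinearMap.ker (aeval (R := ℚ) P).toLinearMap = ⊥ := by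
    rw [LinearMap.ker_eq_bot']
    intro Q hQ
    by_contra h0
    exact hcon Q h0 hQ
  set D := Finset.univ.sup (fun i : Fin 4 => (P i).totalDegree) with hD
  set d := (4*D+1)^3 with hd
  set m := 4*(d*D) with hm
  have hd1 : 1 ≤ d := Nat.one_le_pow _ _ (by omega)
  -- the boxes
  set box4 : Finset (Fin 4 →₀ ℕ) :=
    ((Finset.range (d+1)) ×ˢ (Finset.range (d+1)) ×ˢ (Finset.range (d+1)) ×ˢ
      (Finset.range (d+1))).image e4 with hbox4
  have hbox4card : box4.card = (d+1)^4 := by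
    rw [hbox4, Finset.card_image_of_injective _ e4_inj]
    simp [Finset.card_product]; ring
  have hbox4le : ∀ α ∈ box4, ∀ i, α i ≤ d := by
    intro α hα i
    rw [hbox4, Finset.mem_image] at hα
    obtain ⟨x, hx, rfl⟩ := hα
    simp only [Finset.mem_product, Finset.mem_range] at hx
    rw [e4_apply]
    fin_cases i <;> simp <;> omega
  set T : Finset (MvPolynomial (Fin 3) ℚ) :=
    ((Finset.range (m+1)) ×ˢ (Finset.range (m+1)) ×ˢ (Finset.range (m+1))).image
      (fun x => monomial (e3 x) (1:ℚ)) with hT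
  have hTcard : T.card ≤ (m+1)^3 := by
    calc T.card ≤ _ := Finset.card_image_le
    _ = (m+1)^3 := by simp [Finset.card_product]; ring
  -- every polynomial of low degree is in span T
  have hspan : ∀ g : MvPolynomial (Fin 3) ℚ, g.totalDegree ≤ m →
      g ∈ Submodule.span ℚ (T : Set (MvPolynomial (Fin 3) ℚ)) := by
    intro g hg
    rw [g.as_sum]
    apply Submodule.sum_mem
    intro β hβ
    have hβle : ∀ i, β i ≤ m := by
      intro i
      calc β i ≤ β.sum fun _ e => e := by
            by_cases h : i ∈ β.support
            · exact Finset.single_le_sum (fun _ _ => Nat.zero_le _) h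
            · simp [Finsupp.notMem_support_iff.mp h]
      _ ≤ g.totalDegree := MvPolynomial.le_totalDegree hβ
      _ ≤ m := hg
    have hmem : monomial β (1:ℚ) ∈ T := by
      rw [hT, Finset.mem_image]
      refine ⟨(β 0, β 1, β 2), ?_, by rw [e3_surj]⟩
      simp only [Finset.mem_product, Finset.mem_range]
      exact ⟨by have := hβle 0; omega, by have := hβle 1; omega, by have := hβle 2; omega⟩
    have : monomial β (coeff β g) = (coeff β g) • monomial β (1:ℚ) := by
      rw [MvPolynomial.smul_monomial, smul_eq_mul, mul_one]
    rw [this]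
    exact Submodule.smul_mem _ _ (Submodule.subset_span hmem)
  -- linear independence of images of monomials in box4
  have hli : LinearIndependent ℚ
      (fun α : box4 => aeval P (monomial (α : Fin 4 →₀ ℕ) (1:ℚ))) := by
    have h1 : LinearIndependent ℚ (fun α : box4 => monomial (α : Fin 4 →₀ ℕ) (1:ℚ)) := by
      have := (MvPolynomial.basisMonomials (Fin 4) ℚ).linearIndependent
      have h2 := this.comp (fun α : box4 => (α : Fin 4 →₀ ℕ)) Subtype.val_injective
      rw [MvPolynomial.coe_basisMonomials] at h2
      exact h2
    have := h1.map' (aeval (R := ℚ) P).toLinearMap hker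
    exact this
  -- degrees of images
  have hdeg : ∀ α ∈ box4, (aeval P (monomial α (1:ℚ))).totalDegree ≤ m := by
    intro α hα
    rw [MvPolynomial.aeval_monomial]
    calc ((algebraMap ℚ _) 1 * α.prod fun i k => P i ^ k).totalDegree
        = (α.prod fun i k => P i ^ k).totalDegree := by simp
    _ ≤ ∑ i ∈ α.support, (P i ^ α i).totalDegree :=
        MvPolynomial.totalDegree_finset_prod _ _
    _ ≤ ∑ i ∈ α.support, d * D := by
        apply Finset.sum_le_sum
        intro i _
        calc (P i ^ α i).totalDegree ≤ α i * (P i).totalDegree :=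
              MvPolynomial.totalDegree_pow _ _
        _ ≤ d * D := Nat.mul_le_mul (hbox4le α hα i)
              (hD ▸ Finset.le_sup (f := fun i => (P i).totalDegree) (Finset.mem_univ i))
    _ ≤ ∑ _i : Fin 4, d * D := Finset.sum_le_sum_of_subset (Finset.subset_univ _)
    _ = m := by simp [hm, mul_comm]
  -- corestrict to span T
  set W := Submodule.span ℚ (T : Set (MvPolynomial (Fin 3) ℚ)) with hW
  have : FiniteDimensional ℚ W := FiniteDimensional.span_finset ℚ T
  have hli' : LinearIndependent ℚ (fun α : box4 =>
      (⟨aeval P (monomial (α : Fin 4 →₀ ℕ) (1:ℚ)), hspan _ (hdeg α α.2)⟩ : W)) := by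
    apply LinearIndependent.of_comp W.subtype
    exact hli
  have hcard := hli'.fintype_card_le_finrank
  rw [Fintype.card_coe, hbox4card] at hcard
  have hfr : Module.finrank ℚ W ≤ (m+1)^3 := le_trans (finrank_span_finset_le_card T) hTcard
  have hfinal : (d+1)^4 ≤ (m+1)^3 := le_trans hcard hfr
  -- arithmetic contradiction
  have h1 : m + 1 ≤ d * (4*D+1) := by rw [hm]; nlinarith
  have h2 : (m+1)^3 ≤ (d * (4*D+1))^3 := Nat.pow_le_pow_left h1 3
  have h3 : (d * (4*D+1))^3 = d^3 * d := by rw [mul_pow, hd]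
  have h4 : d^3 * d < (d+1)^4 := by
    calc d^3 * d = d^4 := by ring
    _ < (d+1)^4 := Nat.pow_lt_pow_left (by omega) (by omega)
  omega




lemma lex_decomp (Q : MvPolynomial (Fin 4) ℚ) (hQ : Q ≠ 0) :
    ∃ (c : ℚ) (μ : Fin 4 → ℕ) (R : Fin 4 → MvPolynomial (Fin 4) ℚ), c ≠ 0 ∧
      Q = C c * (X 0 ^ μ 0 * (X 1 ^ μ 1 * (X 2 ^ μ 2 * X 3 ^ μ 3)))
        + X 0 ^ (μ 0 + 1) * R 0
        + X 0 ^ μ 0 * (X 1 ^ (μ 1 + 1) * R 1)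
        + X 0 ^ μ 0 * (X 1 ^ μ 1 * (X 2 ^ (μ 2 + 1) * R 2))
        + X 0 ^ μ 0 * (X 1 ^ μ 1 * (X 2 ^ μ 2 * (X 3 ^ (μ 3 + 1) * R 3))) := by
  classical
  have hsupp : (Q.support.image (toLex : (Fin 4 →₀ ℕ) → Lex (Fin 4 →₀ ℕ))).Nonempty :=
    (Finset.image_nonempty).mpr (MvPolynomial.support_nonempty.mpr hQ)
  set μL := (Q.support.image toLex).min' hsupp with hμL
  set μ : Fin 4 →₀ ℕ := ofLex μL with hμ
  have hμmem : μ ∈ Q.support := by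
    have := (Q.support.image toLex).min'_mem hsupp
    rw [← hμL] at this
    rw [Finset.mem_image] at this
    obtain ⟨α, hα, hαe⟩ := this
    have : α = μ := by rw [hμ, ← hαe]; rfl
    rwa [this] at hα
  have hmin : ∀ α ∈ Q.support, ¬ (toLex α < toLex μ) := by
    intro α hα hlt
    have h1 : μL ≤ toLex α :=
      Finset.min'_le _ _ (Finset.mem_image_of_mem _ hα)
    have : toLex μ = μL := rfl
    rw [this] at hlt
    exact absurd h1 (not_le_of_gt hlt)
  set c := coeff μ Q with hc
  have hcne : c ≠ 0 := by rwa [← MvPolynomial.mem_support_iff]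
  set S := Q - monomial μ c with hS
  -- facts about support of S
  have hSQ : ∀ α, α ∈ S.support → α ≠ μ ∧ coeff α S = coeff α Q := by
    intro α hα
    have hne : α ≠ μ := by
      intro h
      rw [MvPolynomial.mem_support_iff, hS, h] at hα
      simp [MvPolynomial.coeff_monomial] at hα
      exact hα (sub_self _)
    refine ⟨hne, ?_⟩
    rw [hS, MvPolynomial.coeff_sub, MvPolynomial.coeff_monomial, if_neg (fun h => hne h.symm)]
    ring
  -- classifier
  set g : (Fin 4 →₀ ℕ) → Fin 4 := fun α =>
    if α 0 ≠ μ 0 then 0 else if α 1 ≠ μ 1 then 1 else if α 2 ≠ μ 2 then 2 else 3 with hg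
  have hkey : ∀ α ∈ S.support, (∀ i, i < g α → α i = μ i) ∧ μ (g α) < α (g α) := by
    intro α hα
    obtain ⟨hne, -⟩ := hSQ α hα
    have hαQ : α ∈ Q.support := by
      rw [MvPolynomial.mem_support_iff, ← (hSQ α hα).2]
      exact MvPolynomial.mem_support_iff.mp hα
    have base : (∀ i, i < g α → α i = μ i) ∧ α (g α) ≠ μ (g α) := by
      by_cases h0 : α 0 = μ 0
      · by_cases h1 : α 1 = μ 1
        · by_cases h2 : α 2 = μ 2
          · have h3 : α 3 ≠ μ 3 := by
              intro h3
              apply hne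
              ext i
              fin_cases i <;> assumption
            constructor
            · intro i hi
              have hgα : g α = 3 := by simp [hg, h0, h1, h2]
              rw [hgα] at hi
              fin_cases i <;> first | assumption | (exfalso; exact absurd hi (by decide))
            · have hgα : g α = 3 := by simp [hg, h0, h1, h2]
              rw [hgα]; exact h3
          · have hgα : g α = 2 := by simp [hg, h0, h1, h2]
            rw [hgα]
            exact ⟨fun i hi => by fin_cases i <;> first | assumption | (exfalso; exact absurd hi (by decide)), h2⟩
        · have hgα : g α = 1 := by simp [hg, h0, h1]
          rw [hgα]
          exact ⟨fun i hi => by fin_cases i <;> first | assumption | (exfalso; exact absurd hi (by decide)), h1⟩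
      · have hgα : g α = 0 := by simp [hg, h0]
        rw [hgα]
        exact ⟨fun i hi => by exact absurd hi (by simp), h0⟩
    refine ⟨base.1, ?_⟩
    rcases lt_or_gt_of_ne base.2 with h | h
    · exfalso
      apply hmin α hαQ
      rw [Finsupp.Lex.lt_iff]
      exact ⟨g α, fun j hj => (base.1 j hj), h⟩
    · exact h
  -- the prefix exponents
  set ν : Fin 4 → (Fin 4 →₀ ℕ) :=
    ![Finsupp.single 0 (μ 0 + 1),
      Finsupp.single 0 (μ 0) + Finsupp.single 1 (μ 1 + 1),
      Finsupp.single 0 (μ 0) + Finsupp.single 1 (μ 1) + Finsupp.single 2 (μ 2 + 1),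
      Finsupp.single 0 (μ 0) + Finsupp.single 1 (μ 1) + Finsupp.single 2 (μ 2)
        + Finsupp.single 3 (μ 3 + 1)] with hν
  have hν0 : ν 0 = Finsupp.single 0 (μ 0 + 1) := by simp [hν]
  have hν1 : ν 1 = Finsupp.single 0 (μ 0) + Finsupp.single 1 (μ 1 + 1) := by simp [hν]
  have hν2 : ν 2 = Finsupp.single 0 (μ 0) + Finsupp.single 1 (μ 1)
      + Finsupp.single 2 (μ 2 + 1) := by simp [hν]
  have hν3 : ν 3 = Finsupp.single 0 (μ 0) + Finsupp.single 1 (μ 1) + Finsupp.single 2 (μ 2)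
      + Finsupp.single 3 (μ 3 + 1) := by simp [hν]
  have hνle : ∀ α ∈ S.support, ν (g α) ≤ α := by
    intro α hα
    obtain ⟨hpre, hlt⟩ := hkey α hα
    obtain ⟨j, hj⟩ : ∃ j, g α = j := ⟨_, rfl⟩
    rw [hj] at hpre hlt ⊢
    fin_cases j
    · show ν 0 ≤ α
      replace hlt : μ 0 < α 0 := hlt
      rw [hν0, Finsupp.le_def]
      intro i
      by_cases hi0 : i = 0
      · subst hi0; simp [Finsupp.single_apply]; omega
      · have h0i : ¬(0:Fin 4) = i := fun h => hi0 h.symm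
        simp [Finsupp.single_apply, h0i]
    · show ν 1 ≤ α
      replace hlt : μ 1 < α 1 := hlt
      have h0 : α 0 = μ 0 := hpre 0 (by decide)
      rw [hν1, Finsupp.le_def]
      intro i
      by_cases hi0 : i = 0
      · subst hi0; simp [Finsupp.single_apply]; omega
      by_cases hi1 : i = 1
      · subst hi1; simp [Finsupp.single_apply]; omega
      have h0i : ¬(0:Fin 4) = i := fun h => hi0 h.symm
      have h1i : ¬(1:Fin 4) = i := fun h => hi1 h.symm
      simp [Finsupp.single_apply, h0i, h1i]
    · show ν 2 ≤ α
      replace hlt : μ 2 < α 2 := hlt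
      have h0 : α 0 = μ 0 := hpre 0 (by decide)
      have h1 : α 1 = μ 1 := hpre 1 (by decide)
      rw [hν2, Finsupp.le_def]
      intro i
      by_cases hi0 : i = 0
      · subst hi0; simp [Finsupp.single_apply]; omega
      by_cases hi1 : i = 1
      · subst hi1; simp [Finsupp.single_apply]; omega
      by_cases hi2 : i = 2
      · subst hi2; simp [Finsupp.single_apply]; omega
      have h0i : ¬(0:Fin 4) = i := fun h => hi0 h.symm
      have h1i : ¬(1:Fin 4) = i := fun h => hi1 h.symm
      have h2i : ¬(2:Fin 4) = i := fun h => hi2 h.symm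
      simp [Finsupp.single_apply, h0i, h1i, h2i]
    · show ν 3 ≤ α
      replace hlt : μ 3 < α 3 := hlt
      have h0 : α 0 = μ 0 := hpre 0 (by decide)
      have h1 : α 1 = μ 1 := hpre 1 (by decide)
      have h2 : α 2 = μ 2 := hpre 2 (by decide)
      rw [hν3, Finsupp.le_def]
      intro i
      by_cases hi0 : i = 0
      · subst hi0; simp [Finsupp.single_apply]; omega
      by_cases hi1 : i = 1
      · subst hi1; simp [Finsupp.single_apply]; omega
      by_cases hi2 : i = 2
      · subst hi2; simp [Finsupp.single_apply]; omega
      by_cases hi3 : i = 3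
      · subst hi3; simp [Finsupp.single_apply]; omega
      have h0i : ¬(0:Fin 4) = i := fun h => hi0 h.symm
      have h1i : ¬(1:Fin 4) = i := fun h => hi1 h.symm
      have h2i : ¬(2:Fin 4) = i := fun h => hi2 h.symm
      have h3i : ¬(3:Fin 4) = i := fun h => hi3 h.symm
      simp [Finsupp.single_apply, h0i, h1i, h2i, h3i]
  set Rj : Fin 4 → MvPolynomial (Fin 4) ℚ := fun j =>
    ∑ α ∈ S.support.filter (fun α => g α = j), monomial (α - ν j) (coeff α S) with hR
  have hfiber : ∀ j, ∑ α ∈ S.support.filter (fun α => g α = j), monomial α (coeff α S)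
      = monomial (ν j) 1 * Rj j := by
    intro j
    rw [hR, Finset.mul_sum]
    apply Finset.sum_congr rfl
    intro α hα
    rw [Finset.mem_filter] at hα
    rw [MvPolynomial.monomial_mul, one_mul]
    congr 1
    have h1 := hνle α hα.1
    rw [hα.2] at h1
    rw [add_tsub_cancel_of_le h1]
  have hSsum : S = ∑ j : Fin 4, monomial (ν j) 1 * Rj j := by
    conv_lhs => rw [S.as_sum]
    rw [← Finset.sum_fiberwise S.support g (fun α => monomial α (coeff α S))]
    exact Finset.sum_congr rfl (fun j _ => hfiber j)
  have hQS : Q = monomial μ c + S := by rw [hS]; ring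
  refine ⟨c, fun i => μ i, fun j => Rj j, hcne, ?_⟩
  rw [hQS, hSsum, Fin.sum_univ_four]
  have em : (monomial μ c) = C c * (X 0 ^ μ 0 * (X 1 ^ μ 1 * (X 2 ^ μ 2 * X 3 ^ μ 3))) := by
    rw [MvPolynomial.monomial_eq, Finsupp.prod_fintype _ _ (fun i => pow_zero _),
      Fin.prod_univ_four]
    ring
  have e0 : (monomial (ν 0) (1:ℚ)) = X 0 ^ (μ 0 + 1) := by
    simp [hν, MvPolynomial.X_pow_eq_monomial]
  have e1 : (monomial (ν 1) (1:ℚ)) = X 0 ^ μ 0 * X 1 ^ (μ 1 + 1) := by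
    simp [hν, MvPolynomial.X_pow_eq_monomial, MvPolynomial.monomial_mul]
  have e2 : (monomial (ν 2) (1:ℚ)) = X 0 ^ μ 0 * X 1 ^ μ 1 * X 2 ^ (μ 2 + 1) := by
    simp [hν, MvPolynomial.X_pow_eq_monomial, MvPolynomial.monomial_mul]
  have e3 : (monomial (ν 3) (1:ℚ)) = X 0 ^ μ 0 * X 1 ^ μ 1 * X 2 ^ μ 2 * X 3 ^ (μ 3 + 1) := by
    simp [hν, MvPolynomial.X_pow_eq_monomial, MvPolynomial.monomial_mul]
  rw [em, e0, e1, e2, e3]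
  ring


lemma step_lemma {A : Type*} [CommRing A] {p q : Ideal A} (hp : p.IsPrime) (hpq : p ≤ q)
    {x t : A} (r : A) (hxq : x ∈ q) (hxp : x ∉ p) (ht : t ∉ q) (m : ℕ) :
    x ^ m * (t + x * r) ∉ p := by
  intro h
  rcases hp.mem_or_mem h with h1 | h2
  · exact hxp (hp.mem_of_pow_mem _ h1)
  · refine ht ?_
    have hxr : x * r ∈ q := q.mul_mem_right r hxq
    have := q.sub_mem (hpq h2) hxr
    simpa using this

theorem no_chain5 {p0 p1 p2 p3 p4 : Ideal (MvPolynomial (Fin 3) ℚ)}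
    (h0 : p0.IsPrime) (h1 : p1.IsPrime) (h2 : p2.IsPrime) (h3 : p3.IsPrime) (h4 : p4.IsPrime)
    (h01 : p0 < p1) (h12 : p1 < p2) (h23 : p2 < p3) (h34 : p3 < p4) : False := by
  obtain ⟨P0, hP0q, hP0p⟩ := SetLike.exists_of_lt h01
  obtain ⟨P1, hP1q, hP1p⟩ := SetLike.exists_of_lt h12
  obtain ⟨P2, hP2q, hP2p⟩ := SetLike.exists_of_lt h23
  obtain ⟨P3, hP3q, hP3p⟩ := SetLike.exists_of_lt h34
  obtain ⟨Q, hQ0, hQe⟩ := exists_relation ![P0, P1, P2, P3]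
  obtain ⟨c, μ, R, hc, hdec⟩ := lex_decomp Q hQ0
  set b : Fin 4 → MvPolynomial (Fin 3) ℚ := fun j => aeval ![P0, P1, P2, P3] (R j) with hb
  set cc : MvPolynomial (Fin 3) ℚ := algebraMap ℚ _ c with hcc
  have hflat : 0 = cc * (P0 ^ μ 0 * (P1 ^ μ 1 * (P2 ^ μ 2 * P3 ^ μ 3)))
      + P0 ^ (μ 0 + 1) * b 0
      + P0 ^ μ 0 * (P1 ^ (μ 1 + 1) * b 1)
      + P0 ^ μ 0 * (P1 ^ μ 1 * (P2 ^ (μ 2 + 1) * b 2))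
      + P0 ^ μ 0 * (P1 ^ μ 1 * (P2 ^ μ 2 * (P3 ^ (μ 3 + 1) * b 3))) := by
    have := congrArg (aeval ![P0, P1, P2, P3]) hdec
    rw [hQe] at this
    simpa [hb, hcc, MvPolynomial.algebraMap_eq] using this
  have hccq : cc ∉ p4 := by
    intro hmem
    have hu : IsUnit cc := by
      rw [hcc]
      exact (IsUnit.mk0 c hc).map (algebraMap ℚ (MvPolynomial (Fin 3) ℚ))
    exact h4.ne_top (Ideal.eq_top_of_isUnit_mem _ hmem hu)
  have hT3 : P3 ^ μ 3 * (cc + P3 * b 3) ∉ p3 :=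
    step_lemma h3 (le_of_lt h34) (b 3) hP3q hP3p hccq (μ 3)
  have hT2 : P2 ^ μ 2 * ((P3 ^ μ 3 * (cc + P3 * b 3)) + P2 * b 2) ∉ p2 :=
    step_lemma h2 (le_of_lt h23) (b 2) hP2q hP2p hT3 (μ 2)
  have hT1 : P1 ^ μ 1 * ((P2 ^ μ 2 * ((P3 ^ μ 3 * (cc + P3 * b 3)) + P2 * b 2)) + P1 * b 1)
      ∉ p1 :=
    step_lemma h1 (le_of_lt h12) (b 1) hP1q hP1p hT2 (μ 1)
  have hT0 : P0 ^ μ 0 * ((P1 ^ μ 1 * ((P2 ^ μ 2 * ((P3 ^ μ 3 * (cc + P3 * b 3)) + P2 * b 2))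
      + P1 * b 1)) + P0 * b 0) ∉ p0 :=
    step_lemma h0 (le_of_lt h01) (b 0) hP0q hP0p hT1 (μ 0)
  apply hT0
  have : P0 ^ μ 0 * ((P1 ^ μ 1 * ((P2 ^ μ 2 * ((P3 ^ μ 3 * (cc + P3 * b 3)) + P2 * b 2))
      + P1 * b 1)) + P0 * b 0) = 0 := by
    rw [hflat]; ring
  rw [this]
  exact p0.zero_mem





-- no solution to s^3 + X s + X^3 = 0 in ℚ[X]
lemma no_sol (s : Polynomial ℚ) :
    s ^ 3 + Polynomial.X * s + Polynomial.X ^ 3 ≠ 0 := by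
  intro hs
  have hX : (Polynomial.X : Polynomial ℚ) ≠ 0 := Polynomial.X_ne_zero
  -- step 1 : X ∣ s
  have h0 : s.eval 0 = 0 := by
    have := congrArg (Polynomial.eval 0) hs
    simpa using this
  obtain ⟨u, rfl⟩ := (Polynomial.X_dvd_iff (f := s)).mpr (by rwa [Polynomial.coeff_zero_eq_eval_zero])
  -- now X^2 * (X * u^3 + u + X) = 0
  have h2 : Polynomial.X * u ^ 3 + u + Polynomial.X = 0 := by
    have hX2 : (Polynomial.X ^ 2 : Polynomial ℚ) ≠ 0 := pow_ne_zero _ hX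
    apply mul_left_cancel₀ hX2
    rw [mul_zero, ← hs]; ring
  have h0u : u.eval 0 = 0 := by
    have := congrArg (Polynomial.eval 0) h2
    simpa using this
  obtain ⟨v, rfl⟩ := (Polynomial.X_dvd_iff (f := u)).mpr (by rwa [Polynomial.coeff_zero_eq_eval_zero])
  have h3 : Polynomial.X ^ 3 * v ^ 3 + v + 1 = 0 := by
    apply mul_left_cancel₀ hX
    rw [mul_zero, ← h2]; ring
  have hv0 : v.eval 0 = -1 := by
    have := congrArg (Polynomial.eval 0) h3
    simp at this
    linarith
  have hvne : v ≠ 0 := by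
    intro h; rw [h] at hv0; simp at hv0
  -- degree contradiction
  have heq : Polynomial.X ^ 3 * v ^ 3 = -(v + 1) := by linear_combination h3
  have hd1 : (Polynomial.X ^ 3 * v ^ 3 : Polynomial ℚ).natDegree = 3 + 3 * v.natDegree := by
    rw [Polynomial.natDegree_mul (pow_ne_zero _ hX) (pow_ne_zero _ hvne),
      Polynomial.natDegree_pow, Polynomial.natDegree_pow, Polynomial.natDegree_X]
  have hd2 : (-(v + 1) : Polynomial ℚ).natDegree ≤ v.natDegree := by
    rw [Polynomial.natDegree_neg]
    calc (v + 1).natDegree ≤ max v.natDegree (1 : Polynomial ℚ).natDegree :=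
      Polynomial.natDegree_add_le _ _
    _ = v.natDegree := by simp
  rw [heq] at hd1
  omega

-- the cubic in (ℚ[X])[Y]
def pcub : Polynomial (Polynomial ℚ) :=
  Polynomial.X ^ 3 + Polynomial.C Polynomial.X * Polynomial.X
    + Polynomial.C (Polynomial.X ^ 3)

lemma pcub_deg_lt : ((Polynomial.C Polynomial.X * Polynomial.X
    + Polynomial.C (Polynomial.X ^ 3) : Polynomial (Polynomial ℚ))).degree < 3 := by
  have h : ((Polynomial.C Polynomial.X * Polynomial.X
      + Polynomial.C (Polynomial.X ^ 3) : Polynomial (Polynomial ℚ))).degree ≤ 2 := by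
    apply le_trans (Polynomial.degree_add_le _ _)
    apply max_le
    · apply le_trans (Polynomial.degree_mul_le _ _)
      calc (Polynomial.C (Polynomial.X : Polynomial ℚ)).degree + Polynomial.X.degree
          ≤ 0 + 1 := by
            apply add_le_add Polynomial.degree_C_le
            rw [Polynomial.degree_X]
      _ ≤ 2 := by norm_num
    · apply le_trans Polynomial.degree_C_le; norm_num
  exact lt_of_le_of_lt h (by decide)

lemma pcub_monic : pcub.Monic := by
  have := Polynomial.monic_X_pow_add (n := 3) pcub_deg_lt
  simpa [pcub, add_assoc] using this

lemma pcub_natDegree : pcub.natDegree = 3 := by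
  have h := pcub_deg_lt
  have hdeg : pcub.degree = 3 := by
    rw [pcub, add_assoc]
    rw [Polynomial.degree_add_eq_left_of_degree_lt]
    · exact Polynomial.degree_X_pow 3
    · rw [Polynomial.degree_X_pow]; exact h
  exact Polynomial.natDegree_eq_of_degree_eq_some hdeg

-- helper: monic cubic over a field with no root is irreducible
lemma irreducible_of_monic_natDegree_three_no_root {K : Type*} [Field K] (p : Polynomial K)
    (hm : p.Monic) (h3 : p.natDegree = 3) (hnr : ∀ r : K, p.eval r ≠ 0) : Irreducible p := by
  constructor
  · intro hu
    rw [Polynomial.isUnit_iff_degree_eq_zero] at hu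
    rw [Polynomial.degree_eq_natDegree hm.ne_zero, h3] at hu
    exact absurd hu (by decide)
  · intro a b hab
    by_contra hcon
    push_neg at hcon
    obtain ⟨hua, hub⟩ := hcon
    have ha0 : a ≠ 0 := by rintro rfl; simp at hab; exact hm.ne_zero hab
    have hb0 : b ≠ 0 := by rintro rfl; simp at hab; exact hm.ne_zero hab
    have hsum : a.natDegree + b.natDegree = 3 := by
      rw [← Polynomial.natDegree_mul ha0 hb0, ← hab, h3]
    have hge : ∀ c : Polynomial K, c ≠ 0 → ¬ IsUnit c → 1 ≤ c.natDegree := by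
      intro c hc0 huc
      by_contra hlt
      push_neg at hlt
      interval_cases h : c.natDegree
      · have := Polynomial.eq_C_of_natDegree_eq_zero h
        apply huc
        rw [this]
        exact (Polynomial.isUnit_C).mpr (Ne.isUnit (fun hh => hc0 (by rw [this, hh, map_zero])))
    have hroot : ∃ g : Polynomial K, (g ∣ p) ∧ g.natDegree = 1 := by
      have ha1 := hge a ha0 hua
      have hb1 := hge b hb0 hub
      rcases Nat.lt_or_ge a.natDegree 2 with h | h
      · exact ⟨a, ⟨b, hab⟩, by omega⟩
      · exact ⟨b, ⟨a, by rw [hab]; ring⟩, by omega⟩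
    obtain ⟨g, ⟨h, hgh⟩, hg1⟩ := hroot
    have hc1 : g.coeff 1 ≠ 0 := by
      have hgne : g ≠ 0 := fun h => by simp [h] at hg1
      have := Polynomial.leadingCoeff_ne_zero.mpr hgne
      rwa [Polynomial.leadingCoeff, hg1] at this
    set r := -(g.coeff 0) / (g.coeff 1) with hr
    have hgr : g.eval r = 0 := by
      have hgeq : g = Polynomial.C (g.coeff 1) * Polynomial.X + Polynomial.C (g.coeff 0) :=
        Polynomial.eq_X_add_C_of_natDegree_le_one (by omega)
      rw [hgeq]
      simp [hr]
      field_simp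
      ring
    exact hnr r (by rw [hgh, Polynomial.eval_mul, hgr, zero_mul])

section Irred
-- the fraction field of ℚ[X]
abbrev Kf := FractionRing (Polynomial ℚ)

lemma pcub_irreducible : Irreducible pcub := by
  apply Polynomial.Monic.irreducible_of_irreducible_map
    (algebraMap (Polynomial ℚ) Kf) pcub pcub_monic
  apply irreducible_of_monic_natDegree_three_no_root
  · exact pcub_monic.map _
  · rw [pcub_monic.natDegree_map, pcub_natDegree]
  · intro r hr
    -- r is integral over ℚ[X]
    have hint : IsIntegral (Polynomial ℚ) r := by
      refine ⟨pcub, pcub_monic, ?_⟩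
      show Polynomial.eval₂ _ _ _ = 0
      rw [← Polynomial.eval_map]
      exact hr
    obtain ⟨s, hs⟩ := IsIntegrallyClosed.isIntegral_iff.mp hint
    rw [← hs] at hr
    have heval : algebraMap (Polynomial ℚ) Kf (pcub.eval s) = 0 := by
      rw [← hr]
      rw [Polynomial.eval_map, Polynomial.eval₂_at_apply]
    have h0 : pcub.eval s = 0 :=
      (map_eq_zero_iff _ (IsFractionRing.injective (Polynomial ℚ) Kf)).mp heval
    apply no_sol s
    rw [← h0, pcub]
    simp
end Irred

section Transfer

noncomputable def fprime : MvPolynomial (Fin 2) ℚ := X 0 * X 1 + X 0 ^ 3 + X 1 ^ 3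

noncomputable def eqv2 : MvPolynomial (Fin 2) ℚ ≃ₐ[ℚ] Polynomial (Polynomial ℚ) :=
  (MvPolynomial.finSuccEquiv ℚ 1).trans
    (Polynomial.mapAlgEquiv
      ((MvPolynomial.finSuccEquiv ℚ 0).trans
        (Polynomial.mapAlgEquiv (MvPolynomial.isEmptyAlgEquiv ℚ (Fin 0)))))

lemma eqv2_X0 : eqv2 (X 0) = Polynomial.X := by
  simp [eqv2, MvPolynomial.finSuccEquiv_X_zero]

lemma eqv2_X1 : eqv2 (X 1) = Polynomial.C Polynomial.X := by
  have h1 : (X 1 : MvPolynomial (Fin 2) ℚ) = X (Fin.succ 0) := rfl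
  rw [eqv2, AlgEquiv.trans_apply, h1, MvPolynomial.finSuccEquiv_X_succ,
    Polynomial.coe_mapAlgEquiv, Polynomial.map_C]
  congr 1
  show ((MvPolynomial.finSuccEquiv ℚ 0).trans
      (Polynomial.mapAlgEquiv (isEmptyAlgEquiv ℚ (Fin 0)))) (X 0) = Polynomial.X
  rw [AlgEquiv.trans_apply, MvPolynomial.finSuccEquiv_X_zero,
    Polynomial.coe_mapAlgEquiv, Polynomial.map_X]

lemma eqv2_fprime : eqv2 fprime = pcub := by
  rw [fprime, pcub]
  rw [map_add, map_add, map_mul, map_pow, map_pow, eqv2_X0, eqv2_X1, ← Polynomial.C_pow]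
  ring

lemma fprime_irreducible : Irreducible fprime := by
  have h := MulEquiv.irreducible_iff (f := eqv2) (x := fprime)
  rw [eqv2_fprime] at h
  exact h.mp pcub_irreducible

end Transfer





namespace CurveProof

abbrev A := MvPolynomial (Fin 3) ℚ
abbrev B2 := MvPolynomial (Fin 2) ℚ

def F : A := X 1 * X 2 + X 1 ^ 3 + X 2 ^ 3
def Iideal : Ideal A := Ideal.span {X 0, F}

def φ : A →ₐ[ℚ] B2 := aeval ![0, X 0, X 1]
def ψ : B2 →ₐ[ℚ] A := aeval ![X 1, X 2]

lemma phi_X0 : φ (X 0) = 0 := by simp [φ]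
lemma phi_X1 : φ (X 1) = X 0 := by simp [φ]
lemma phi_X2 : φ (X 2) = X 1 := by simp [φ]
lemma psi_X0 : ψ (X 0) = X 1 := by simp [ψ]
lemma psi_X1 : ψ (X 1) = X 2 := by simp [ψ]

lemma phi_psi (g : B2) : φ (ψ g) = g := by
  have h : φ.comp ψ = AlgHom.id ℚ B2 := by
    apply MvPolynomial.algHom_ext
    intro i
    fin_cases i <;> simp [φ, ψ]
  calc φ (ψ g) = (φ.comp ψ) g := rfl
  _ = g := by rw [h]; rfl

lemma sub_mem_span (g : A) : g - ψ (φ g) ∈ Ideal.span {(X 0 : A)} := by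
  induction g using MvPolynomial.induction_on with
  | C a => simp [φ, ψ]
  | add p q hp hq =>
      have : p + q - ψ (φ (p + q)) = (p - ψ (φ p)) + (q - ψ (φ q)) := by
        rw [map_add, map_add]; ring
      rw [this]
      exact Ideal.add_mem _ hp hq
  | mul_X p i hp =>
      fin_cases i
      · show p * X 0 - ψ (φ (p * X 0)) ∈ _
        have h : p * X 0 - ψ (φ (p * X 0)) = p * X 0 := by
          rw [map_mul, phi_X0, mul_zero, map_zero, sub_zero]
        rw [h]
        exact Ideal.mul_mem_left _ p (Ideal.subset_span rfl)
      · show p * X 1 - ψ (φ (p * X 1)) ∈ _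
        have h : p * X 1 - ψ (φ (p * X 1)) = (p - ψ (φ p)) * X 1 := by
          rw [map_mul, phi_X1, map_mul, psi_X0]; ring
        rw [h]
        exact Ideal.mul_mem_right _ _ hp
      · show p * X 2 - ψ (φ (p * X 2)) ∈ _
        have h : p * X 2 - ψ (φ (p * X 2)) = (p - ψ (φ p)) * X 2 := by
          rw [map_mul, phi_X2, map_mul, psi_X1]; ring
        rw [h]
        exact Ideal.mul_mem_right _ _ hp

lemma ker_phi : RingHom.ker φ = Ideal.span {(X 0 : A)} := by
  apply le_antisymm
  · intro g hg
    have h0 : φ g = 0 := hg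
    have := sub_mem_span g
    rwa [h0, map_zero, sub_zero] at this
  · rw [Ideal.span_le]
    intro x hx
    rw [Set.mem_singleton_iff] at hx
    subst hx
    exact phi_X0

lemma span_X0_prime : (Ideal.span {(X 0 : A)}).IsPrime :=
  ker_phi ▸ RingHom.ker_isPrime φ

lemma phi_F : φ F = fprime := by
  rw [F, fprime, map_add, map_add, map_mul, map_pow, map_pow, phi_X1, phi_X2]

lemma psi_fprime : ψ fprime = F := by
  rw [F, fprime, map_add, map_add, map_mul, map_pow, map_pow, psi_X0, psi_X1]

lemma fprime_prime : Prime fprime :=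
  UniqueFactorizationMonoid.irreducible_iff_prime.mp fprime_irreducible

lemma span_fprime_prime : (Ideal.span {fprime}).IsPrime :=
  (Ideal.span_singleton_prime fprime_prime.ne_zero).mpr fprime_prime

lemma X0_mem_I : (X 0 : A) ∈ Iideal := Ideal.subset_span (by simp)
lemma F_mem_I : F ∈ Iideal := Ideal.subset_span (by simp)

lemma I_eq_comap : Iideal = Ideal.comap φ (Ideal.span {fprime}) := by
  apply le_antisymm
  · rw [Iideal, Ideal.span_le]
    intro x hx
    rcases hx with h | h
    · subst h
      exact Ideal.mem_comap.mpr (by rw [phi_X0]; exact Ideal.zero_mem _)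
    · rw [Set.mem_singleton_iff] at h
      subst h
      exact Ideal.mem_comap.mpr (by rw [phi_F]; exact Ideal.subset_span rfl)
  · intro g hg
    have : φ g ∈ Ideal.span {fprime} := hg
    obtain ⟨h, hh⟩ := Ideal.mem_span_singleton'.mp this
    have hdec : g = (g - ψ (φ g)) + ψ h * F := by
      rw [← hh, map_mul, psi_fprime]
      ring
    rw [hdec]
    apply Ideal.add_mem
    · have := sub_mem_span g
      have hle : Ideal.span {(X 0 : A)} ≤ Iideal := by
        rw [Ideal.span_le]
        intro x hx
        rw [Set.mem_singleton_iff] at hx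
        subst hx
        exact X0_mem_I
      exact hle this
    · exact Ideal.mul_mem_left _ _ F_mem_I

lemma I_isPrime : Iideal.IsPrime := by
  rw [I_eq_comap]
  exact Ideal.IsPrime.comap φ (hK := span_fprime_prime)

lemma F_not_mem_span_X0 : F ∉ Ideal.span {(X 0 : A)} := by
  intro h
  rw [← ker_phi] at h
  have : φ F = 0 := h
  rw [phi_F] at this
  exact fprime_prime.ne_zero this

lemma X1_not_mem_I : (X 1 : A) ∉ Iideal := by
  rw [I_eq_comap]
  intro h
  have h1 : φ (X 1) ∈ Ideal.span {fprime} := h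
  rw [phi_X1] at h1
  obtain ⟨h2, hh⟩ := Ideal.mem_span_singleton'.mp h1
  -- map to Polynomial ℚ via aeval ![Polynomial.X, 0]
  set θ : B2 →ₐ[ℚ] Polynomial ℚ := aeval ![Polynomial.X, 0] with hθ
  have happ := congrArg θ hh
  rw [map_mul] at happ
  have hfprime : θ fprime = Polynomial.X ^ 3 := by simp [fprime, hθ]
  have hX0 : θ (X 0 : B2) = Polynomial.X := by simp [hθ]
  rw [hfprime, hX0] at happ
  have hne : θ h2 ≠ 0 := by
    intro h0
    rw [h0, zero_mul] at happ
    exact Polynomial.X_ne_zero happ.symm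
  have := congrArg Polynomial.natDegree happ
  rw [Polynomial.natDegree_mul hne (pow_ne_zero _ Polynomial.X_ne_zero),
    Polynomial.natDegree_pow, Polynomial.natDegree_X] at this
  omega

def evalZero : A →+* ℚ := (MvPolynomial.eval (fun _ : Fin 3 => (0:ℚ)))

def Mker : Ideal A := RingHom.ker evalZero

lemma Mker_isPrime : Mker.IsPrime := RingHom.ker_isPrime evalZero

lemma X1_mem_Mker : (X 1 : A) ∈ Mker := by
  show evalZero (X 1) = 0
  simp [evalZero]

lemma I_le_Mker : Iideal ≤ Mker := by
  rw [Iideal, Ideal.span_le]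
  intro x hx
  rcases hx with h | h
  · subst h
    show evalZero (X 0) = 0
    simp [evalZero]
  · rw [Set.mem_singleton_iff] at h
    subst h
    show evalZero F = 0
    simp [evalZero, F]

lemma I_lt_Mker : Iideal < Mker :=
  lt_of_le_of_ne I_le_Mker (fun h => X1_not_mem_I (h ▸ X1_mem_Mker))

lemma bot_lt_span_X0 : (⊥ : Ideal A) < Ideal.span {(X 0 : A)} := by
  rw [bot_lt_iff_ne_bot, Ne, Ideal.span_singleton_eq_bot]
  exact MvPolynomial.X_ne_zero 0

lemma span_X0_lt_I : Ideal.span {(X 0 : A)} < Iideal := by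
  rw [SetLike.lt_iff_le_and_exists]
  constructor
  · rw [Ideal.span_le]
    intro x hx
    rw [Set.mem_singleton_iff] at hx
    subst hx
    exact X0_mem_I
  · exact ⟨F, F_mem_I, F_not_mem_span_X0⟩

lemma span_X0_lt_of_I_le {J : Ideal A} (hJ : Iideal ≤ J) : Ideal.span {(X 0 : A)} < J :=
  lt_of_lt_of_le span_X0_lt_I hJ





abbrev Aq := A ⧸ Iideal

lemma M'_isPrime : (Mker.map (Ideal.Quotient.mk Iideal)).IsPrime := by
  haveI := Mker_isPrime
  exact Ideal.map_isPrime_of_surjective Ideal.Quotient.mk_surjective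
    (by rw [Ideal.mk_ker]; exact I_le_Mker)

lemma bot_lt_M' : (⊥ : Ideal Aq) < Mker.map (Ideal.Quotient.mk Iideal) := by
  rw [bot_lt_iff_ne_bot]
  intro h
  have hm : Ideal.Quotient.mk Iideal (X 1) ∈ Mker.map (Ideal.Quotient.mk Iideal) :=
    Ideal.mem_map_of_mem _ X1_mem_Mker
  rw [h, Ideal.mem_bot] at hm
  exact X1_not_mem_I (Ideal.Quotient.eq_zero_iff_mem.mp hm)

lemma comap_lt_comap {x y : PrimeSpectrum Aq} (hxy : x < y) :
    Ideal.comap (Ideal.Quotient.mk Iideal) x.asIdeal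
      < Ideal.comap (Ideal.Quotient.mk Iideal) y.asIdeal := by
  apply lt_of_le_of_ne (Ideal.comap_mono (le_of_lt hxy))
  intro h
  have := Ideal.comap_injective_of_surjective _ Ideal.Quotient.mk_surjective h
  exact ne_of_lt hxy (PrimeSpectrum.ext this)

lemma I_le_comap (x : PrimeSpectrum Aq) :
    Iideal ≤ Ideal.comap (Ideal.Quotient.mk Iideal) x.asIdeal := by
  intro a ha
  rw [Ideal.mem_comap, Ideal.Quotient.eq_zero_iff_mem.mpr ha]
  exact Ideal.zero_mem _

lemma dim_le_one : ∀ p : LTSeries (PrimeSpectrum Aq), p.length ≤ 1 := by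
  intro p
  by_contra hlen
  push_neg at hlen
  have h2 : 2 ≤ p.length := hlen
  have h01 : p.toFun ⟨0, by omega⟩ < p.toFun ⟨1, by omega⟩ :=
    p.strictMono (by rw [Fin.mk_lt_mk]; omega)
  have h12 : p.toFun ⟨1, by omega⟩ < p.toFun ⟨2, by omega⟩ :=
    p.strictMono (by rw [Fin.mk_lt_mk]; omega)
  set x0 := p.toFun ⟨0, by omega⟩
  set x1 := p.toFun ⟨1, by omega⟩
  set x2 := p.toFun ⟨2, by omega⟩
  have hq01 := comap_lt_comap h01
  have hq12 := comap_lt_comap h12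
  exact no_chain5 Ideal.bot_prime span_X0_prime
    (Ideal.IsPrime.comap _ (hK := x0.2)) (Ideal.IsPrime.comap _ (hK := x1.2))
    (Ideal.IsPrime.comap _ (hK := x2.2))
    bot_lt_span_X0 (span_X0_lt_of_I_le (I_le_comap x0)) hq01 hq12

lemma height_le_two : ∀ p : LTSeries (PrimeSpectrum A),
    RelSeries.last p = (⟨Iideal, I_isPrime⟩ : PrimeSpectrum A) → p.length ≤ 2 := by
  intro p hlast
  by_contra hlen
  push_neg at hlen
  have h3 : 3 ≤ p.length := hlen
  set N := p.length with hN
  have h01 : p.toFun ⟨N-3, by omega⟩ < p.toFun ⟨N-2, by omega⟩ :=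
    p.strictMono (by rw [Fin.mk_lt_mk]; omega)
  have h12 : p.toFun ⟨N-2, by omega⟩ < p.toFun ⟨N-1, by omega⟩ :=
    p.strictMono (by rw [Fin.mk_lt_mk]; omega)
  have h23 : p.toFun ⟨N-1, by omega⟩ < p.toFun ⟨N, by omega⟩ :=
    p.strictMono (by rw [Fin.mk_lt_mk]; omega)
  have hlastN : p.toFun ⟨N, by omega⟩ = (⟨Iideal, I_isPrime⟩ : PrimeSpectrum A) := by
    rw [← hlast]
    rfl
  rw [hlastN] at h23
  have h23' : (p.toFun ⟨N-1, by omega⟩).asIdeal < Iideal := h23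
  exact no_chain5 (p.toFun ⟨N-3, by omega⟩).2 (p.toFun ⟨N-2, by omega⟩).2
    (p.toFun ⟨N-1, by omega⟩).2 I_isPrime Mker_isPrime h01 h12 h23' I_lt_Mker

lemma main_dim : ringKrullDim Aq = 1 := by
  haveI := I_isPrime
  haveI : Nontrivial Aq := Ideal.Quotient.nontrivial_iff.mpr I_isPrime.ne_top
  apply le_antisymm
  · show Order.krullDim (PrimeSpectrum Aq) ≤ 1
    rw [Order.krullDim_eq_iSup_length]
    have h : (⨆ (p : LTSeries (PrimeSpectrum Aq)), (p.length : ℕ∞)) ≤ (1 : ℕ∞) :=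
      iSup_le (fun p => by exact_mod_cast dim_le_one p)
    exact_mod_cast h
  · let z0 : PrimeSpectrum Aq := ⟨⊥, Ideal.bot_prime⟩
    let z1 : PrimeSpectrum Aq := ⟨Mker.map (Ideal.Quotient.mk Iideal), M'_isPrime⟩
    let pser : LTSeries (PrimeSpectrum Aq) :=
      ⟨1, ![z0, z1], by
        intro i
        fin_cases i
        show z0 < z1
        exact bot_lt_M'⟩
    have := Order.LTSeries.length_le_krullDim pser
    show (1 : WithBot ℕ∞) ≤ Order.krullDim (PrimeSpectrum Aq)
    exact_mod_cast this

lemma main_height :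
    Order.height (⟨Iideal, I_isPrime⟩ : PrimeSpectrum A) = 2 := by
  apply le_antisymm
  · apply Order.height_le
    intro p hlast
    exact_mod_cast height_le_two p hlast
  · let z0 : PrimeSpectrum A := ⟨⊥, Ideal.bot_prime⟩
    let z1 : PrimeSpectrum A := ⟨Ideal.span {(X 0 : A)}, span_X0_prime⟩
    let z2 : PrimeSpectrum A := ⟨Iideal, I_isPrime⟩
    let pser : LTSeries (PrimeSpectrum A) :=
      ⟨2, ![z0, z1, z2], by
        intro i
        fin_cases i
        · show z0 < z1
          exact bot_lt_span_X0
        · show z1 < z2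
          exact span_X0_lt_I⟩
    have hle : RelSeries.last pser ≤ (⟨Iideal, I_isPrime⟩ : PrimeSpectrum A) := le_of_eq rfl
    have := Order.length_le_height hle
    exact_mod_cast this

end CurveProof

open CurveProof in
theorem stmt_9 :
    letI I : Ideal (MvPolynomial (Fin 3) ℚ) :=
      Ideal.span {X 0, X 1 * X 2 + X 1 ^ 3 + X 2 ^ 3}
    ringKrullDim (MvPolynomial (Fin 3) ℚ ⧸ I) = 1 ∧
      ∃ hI : I.IsPrime,
        Order.height (⟨I, hI⟩ : PrimeSpectrum (MvPolynomial (Fin 3) ℚ)) = 2 := by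
  exact ⟨main_dim, ⟨I_isPrime, main_height⟩⟩

end
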